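/- Color-merging for a single stochastic six-vertex: let C = {c, c+1, ..., N} be a contiguous subset of colors with complement C̄, and define [k]_C = c if k ∈ C and [k]_C = k otherwise. Then for any incoming colors i, j and any outgoing color l ∈ C̄, the sum over k ∈ C of R_z(i,j;k,l) equals R_z([i]_C,[j]_C; c, l). Similarly, for any outgoing color k ∈ C̄, the sum over l ∈ C of R_z(i,j;k,l) equals R_z([i]_C,[j]_C; k, c). Moreover the double sum over k ∈ C and l ∈ C of R_z(i,j;k,l) equals the indicator that both i ∈ C and j ∈ C. -/

import Mathlib

/-- The stochastic R-matrix of the colored six-vertex model: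
`Rweight q z a b c d` is the weight `R_z(a,b;c,d)` of a vertex with incoming
colors `a` (from below) and `b` (from the left), and outgoing colors
`c` (on top) and `d` (to the right). -/
noncomputable def Rweight {N : ℕ} (q z : ℝ) (a b c d : Fin (N + 1)) : ℝ :=
  if a = b ∧ b = c ∧ c = d then 1
  else if b < a ∧ a = c ∧ b = d then q * (1 - z) / (1 - q * z)
  else if a < b ∧ a = c ∧ b = d then (1 - z) / (1 - q * z)
  else if b < a ∧ a = d ∧ b = c then (1 - q) / (1 - q * z)
  else if a < b ∧ a = d ∧ b = c then (1 - q) * z / (1 - q * z)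
  else 0

/-- The color projection `[k]_C` associated with the contiguous set of colors
`C = {c, c+1, ..., N}`: `[k]_C = c` if `k ∈ C` and `[k]_C = k` otherwise. -/
def colorProj {N : ℕ} (c k : Fin (N + 1)) : Fin (N + 1) :=
  if c ≤ k then c else k

/-- `Rweight q z a b k l` vanishes unless `(k,l) = (a,b)` or `(k,l) = (b,a)`. -/
lemma Rweight_eq_zero {N : ℕ} (q z : ℝ) (a b k l : Fin (N + 1))
    (h : ¬((k = a ∧ l = b) ∨ (k = b ∧ l = a))) : Rweight q z a b k l = 0 := by
  unfold Rweight
  split_ifs <;> first | rfl | (exfalso; apply h; omega)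

set_option maxHeartbeats 2000000 in
/-- Color-merging for a single stochastic six-vertex, with
`C = {c, c+1, ..., N}` and complement `C̄ = {0, ..., c-1}`. -/
theorem Rweight_color_merging {N : ℕ} (q z : ℝ) (h : q * z ≠ 1)
    (c i j : Fin (N + 1)) :
    (∀ l : Fin (N + 1), l < c →
        ∑ k ∈ Finset.univ.filter (fun k : Fin (N + 1) => c ≤ k),
            Rweight q z i j k l
          = Rweight q z (colorProj c i) (colorProj c j) c l)
    ∧ (∀ k : Fin (N + 1), k < c →
        ∑ l ∈ Finset.univ.filter (fun l : Fin (N + 1) => c ≤ l),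
            Rweight q z i j k l
          = Rweight q z (colorProj c i) (colorProj c j) k c)
    ∧ (∑ k ∈ Finset.univ.filter (fun k : Fin (N + 1) => c ≤ k),
          ∑ l ∈ Finset.univ.filter (fun l : Fin (N + 1) => c ≤ l),
            Rweight q z i j k l)
        = if c ≤ i ∧ c ≤ j then 1 else 0 := by
  have hqz : (1 : ℝ) - q * z ≠ 0 := sub_ne_zero.mpr (Ne.symm h)
  have hmem : ∀ x : Fin (N + 1), c ≤ x →
      x ∈ Finset.univ.filter (fun k : Fin (N + 1) => c ≤ k) := fun x hx =>
    Finset.mem_filter.mpr ⟨Finset.mem_univ _, hx⟩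
  refine ⟨?_, ?_, ?_⟩
  · -- sum over k ∈ C, fixed l ∉ C
    intro l hl
    by_cases hi : c ≤ i <;> by_cases hj : c ≤ j <;>
      simp only [colorProj, if_pos, if_neg, hi, hj, if_true, if_false]
    · -- i, j ∈ C : both sides vanish
      rw [Finset.sum_eq_zero]
      · symm; unfold Rweight; split_ifs <;> first | rfl | (exfalso; omega)
      · intro k hk
        simp only [Finset.mem_filter, Finset.mem_univ, true_and] at hk
        exact Rweight_eq_zero q z i j k l (by omega)
    · -- i ∈ C, j ∉ C
      by_cases hlj : l = j
      · subst hlj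
        rw [Finset.sum_eq_single_of_mem i (hmem i hi)]
        · unfold Rweight; split_ifs <;> first | rfl | (exfalso; omega)
        · intro b hb hbne
          simp only [Finset.mem_filter, Finset.mem_univ, true_and] at hb
          exact Rweight_eq_zero q z i l b l (by omega)
      · rw [Finset.sum_eq_zero]
        · symm; unfold Rweight; split_ifs <;> first | rfl | (exfalso; omega)
        · intro k hk
          simp only [Finset.mem_filter, Finset.mem_univ, true_and] at hk
          exact Rweight_eq_zero q z i j k l (by omega)
    · -- i ∉ C, j ∈ C
      by_cases hli : l = i
      · subst hli
        rw [Finset.sum_eq_single_of_mem j (hmem j hj)]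
        · unfold Rweight; split_ifs <;> first | rfl | (exfalso; omega)
        · intro b hb hbne
          simp only [Finset.mem_filter, Finset.mem_univ, true_and] at hb
          exact Rweight_eq_zero q z l j b l (by omega)
      · rw [Finset.sum_eq_zero]
        · symm; unfold Rweight; split_ifs <;> first | rfl | (exfalso; omega)
        · intro k hk
          simp only [Finset.mem_filter, Finset.mem_univ, true_and] at hk
          exact Rweight_eq_zero q z i j k l (by omega)
    · -- i, j ∉ C : both sides vanish
      rw [Finset.sum_eq_zero]
      · symm; unfold Rweight; split_ifs <;> first | rfl | (exfalso; omega)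
      · intro k hk
        simp only [Finset.mem_filter, Finset.mem_univ, true_and] at hk
        exact Rweight_eq_zero q z i j k l (by omega)
  · -- sum over l ∈ C, fixed k ∉ C
    intro k hk
    by_cases hi : c ≤ i <;> by_cases hj : c ≤ j <;>
      simp only [colorProj, if_pos, if_neg, hi, hj, if_true, if_false]
    · rw [Finset.sum_eq_zero]
      · symm; unfold Rweight; split_ifs <;> first | rfl | (exfalso; omega)
      · intro l hl
        simp only [Finset.mem_filter, Finset.mem_univ, true_and] at hl
        exact Rweight_eq_zero q z i j k l (by omega)
    · -- i ∈ C, j ∉ C : nonzero only when k = j, l = i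
      by_cases hkj : k = j
      · subst hkj
        rw [Finset.sum_eq_single_of_mem i (hmem i hi)]
        · unfold Rweight; split_ifs <;> first | rfl | (exfalso; omega)
        · intro b hb hbne
          simp only [Finset.mem_filter, Finset.mem_univ, true_and] at hb
          exact Rweight_eq_zero q z i k k b (by omega)
      · rw [Finset.sum_eq_zero]
        · symm; unfold Rweight; split_ifs <;> first | rfl | (exfalso; omega)
        · intro l hl
          simp only [Finset.mem_filter, Finset.mem_univ, true_and] at hl
          exact Rweight_eq_zero q z i j k l (by omega)
    · -- i ∉ C, j ∈ C : nonzero only when k = i, l = j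
      by_cases hki : k = i
      · subst hki
        rw [Finset.sum_eq_single_of_mem j (hmem j hj)]
        · unfold Rweight; split_ifs <;> first | rfl | (exfalso; omega)
        · intro b hb hbne
          simp only [Finset.mem_filter, Finset.mem_univ, true_and] at hb
          exact Rweight_eq_zero q z k j k b (by omega)
      · rw [Finset.sum_eq_zero]
        · symm; unfold Rweight; split_ifs <;> first | rfl | (exfalso; omega)
        · intro l hl
          simp only [Finset.mem_filter, Finset.mem_univ, true_and] at hl
          exact Rweight_eq_zero q z i j k l (by omega)
    · rw [Finset.sum_eq_zero]
      · symm; unfold Rweight; split_ifs <;> first | rfl | (exfalso; omega)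
      · intro l hl
        simp only [Finset.mem_filter, Finset.mem_univ, true_and] at hl
        exact Rweight_eq_zero q z i j k l (by omega)
  · -- double sum
    by_cases hij' : c ≤ i ∧ c ≤ j
    · obtain ⟨hi, hj⟩ := hij'
      rw [if_pos ⟨hi, hj⟩]
      by_cases hij : i = j
      · subst hij
        rw [Finset.sum_eq_single_of_mem i (hmem i hi)]
        · rw [Finset.sum_eq_single_of_mem i (hmem i hi)]
          · unfold Rweight; split_ifs <;> first | rfl | (exfalso; omega)
          · intro b hb hbne
            exact Rweight_eq_zero q z i i i b (by omega)
        · intro b hb hbne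
          simp only [Finset.mem_filter, Finset.mem_univ, true_and] at hb
          exact Finset.sum_eq_zero fun l hl =>
            Rweight_eq_zero q z i i b l (by omega)
      · -- i ≠ j, both in C : two nonzero outer terms, k = i and k = j
        have hsub : ({i, j} : Finset (Fin (N + 1))) ⊆
            Finset.univ.filter (fun k : Fin (N + 1) => c ≤ k) := by
          intro x hx
          simp only [Finset.mem_insert, Finset.mem_singleton] at hx
          rcases hx with rfl | rfl
          · exact hmem _ hi
          · exact hmem _ hj
        rw [← Finset.sum_subset hsub, Finset.sum_pair hij]
        · have h1 : (∑ l ∈ Finset.univ.filter (fun l : Fin (N + 1) => c ≤ l),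
              Rweight q z i j i l) = Rweight q z i j i j := by
            rw [Finset.sum_eq_single_of_mem j (hmem j hj)]
            intro b hb hbne
            exact Rweight_eq_zero q z i j i b (by omega)
          have h2 : (∑ l ∈ Finset.univ.filter (fun l : Fin (N + 1) => c ≤ l),
              Rweight q z i j j l) = Rweight q z i j j i := by
            rw [Finset.sum_eq_single_of_mem i (hmem i hi)]
            intro b hb hbne
            exact Rweight_eq_zero q z i j j b (by omega)
          rw [h1, h2]
          rcases lt_or_gt_of_ne hij with hlt | hgt
          · have e1 : Rweight q z i j i j = (1 - z) / (1 - q * z) := by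
              unfold Rweight; split_ifs <;> first | rfl | (exfalso; omega)
            have e2 : Rweight q z i j j i = (1 - q) * z / (1 - q * z) := by
              unfold Rweight; split_ifs <;> first | rfl | (exfalso; omega)
            rw [e1, e2, ← add_div, div_eq_one_iff_eq hqz]; ring
          · have e1 : Rweight q z i j i j = q * (1 - z) / (1 - q * z) := by
              unfold Rweight; split_ifs <;> first | rfl | (exfalso; omega)
            have e2 : Rweight q z i j j i = (1 - q) / (1 - q * z) := by
              unfold Rweight; split_ifs <;> first | rfl | (exfalso; omega)
            rw [e1, e2]; field_simp; ring
        · intro x hx hx'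
          simp only [Finset.mem_insert, Finset.mem_singleton] at hx'
          push_neg at hx'
          exact Finset.sum_eq_zero fun l hl =>
            Rweight_eq_zero q z i j x l (by omega)
    · rw [if_neg hij']
      refine Finset.sum_eq_zero fun k hk => Finset.sum_eq_zero fun l hl => ?_
      simp only [Finset.mem_filter, Finset.mem_univ, true_and] at hk hl
      have : ¬ c ≤ i ∨ ¬ c ≤ j := by tauto
      exact Rweight_eq_zero q z i j k l (by omega)
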